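/- Let m ≥ 2 and suppose 𝔼[X] = 0. Then the reduced univariate estimator c₄⁽ᶜ⁾ = ( (m+2)·\overline{X⁴} − 3m·(\overline{X²})² ) / (m−1) satisfies 𝔼[c₄⁽ᶜ⁾] = 𝔼[X⁴] − 3𝔼[X²]², which under the hypothesis 𝔼[X]=0 equals the fourth cumulant of X. -/

import Mathlib

open MeasureTheory ProbabilityTheory Finset ENNReal

theorem unbiased_c4_c_uni {Ω : Type*} [MeasurableSpace Ω] (μ : Measure Ω) [IsProbabilityMeasure μ]
    (m : ℕ) (hm : 2 ≤ m)
    (X : Fin m → Ω → ℝ)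
    (hXmeas : ∀ i, Measurable (X i))
    (hindep : iIndepFun X μ)
    (hident : ∀ i, IdentDistrib (X i) (X ⟨0, by omega⟩) μ μ)
    (hX : MemLp (X ⟨0, by omega⟩) 4 μ)
    (hEX : (∫ ω, X ⟨0, by omega⟩ ω ∂μ) = 0) :
    (∫ ω, (((m:ℝ)+2) * ((m:ℝ)⁻¹ * ∑ i, (X i ω)^4) - 3 * (m:ℝ) * ((m:ℝ)⁻¹ * ∑ i, (X i ω)^2)^2) / ((m:ℝ)-1) ∂μ) = (∫ ω, X ⟨0, by omega⟩ ω^4 ∂μ) - 3 * (∫ ω, X ⟨0, by omega⟩ ω^2 ∂μ)^2 ∧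
    (∫ ω, X ⟨0, by omega⟩ ω^4 ∂μ) - 3 * (∫ ω, X ⟨0, by omega⟩ ω^2 ∂μ)^2 = (∫ ω, X ⟨0, by omega⟩ ω^4 ∂μ) - 4 * (∫ ω, X ⟨0, by omega⟩ ω^3 ∂μ) * (∫ ω, X ⟨0, by omega⟩ ω ∂μ) - 3 * (∫ ω, X ⟨0, by omega⟩ ω^2 ∂μ)^2 + 12 * (∫ ω, X ⟨0, by omega⟩ ω^2 ∂μ) * (∫ ω, X ⟨0, by omega⟩ ω ∂μ)^2 - 6 * (∫ ω, X ⟨0, by omega⟩ ω ∂μ)^4 := by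
  constructor
  · set i0 : Fin m := ⟨0, by omega⟩ with hi0
    set M4 : ℝ := ∫ ω, X i0 ω^4 ∂μ with hM4
    set M2 : ℝ := ∫ ω, X i0 ω^2 ∂μ with hM2
    have hX4 : ∀ i, MemLp (X i) 4 μ := fun i => (hident i).symm.memLp_snd hX
    have hXsq : ∀ i, MemLp (fun ω => X i ω ^ 2) 2 μ := by
      intro i
      have h := (hX4 i).norm_rpow_div 2
      have h2 : ((4 : ℝ≥0∞) / 2) = 2 := by
        rw [show (4:ℝ≥0∞) = 2*2 by norm_num, mul_div_assoc,
          ENNReal.div_self (by norm_num) (by norm_num), mul_one]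
      rw [h2] at h
      have : (fun x => ‖X i x‖ ^ ((2:ℝ≥0∞)).toReal) = fun ω => X i ω ^ 2 := by
        funext ω
        simp [Real.rpow_natCast, sq_abs]
      rwa [this] at h
    have hint2 : ∀ i, Integrable (fun ω => X i ω ^ 2) μ :=
      fun i => (hXsq i).integrable (by norm_num)
    have hint4 : ∀ i, Integrable (fun ω => X i ω ^ 4) μ := by
      intro i
      have h := (hXsq i).integrable_sq
      simpa [← pow_mul] using h
    have hintprod : ∀ i j, Integrable (fun ω => X i ω ^ 2 * X j ω ^ 2) μ := by
      intro i j
      rcases eq_or_ne i j with rfl | h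
      · simpa [← pow_add] using hint4 i
      · have := ((hindep.indepFun h).comp (measurable_id.pow_const 2)
          (measurable_id.pow_const 2)).integrable_mul (hint2 i) (hint2 j)
        exact this
    have hmom : ∀ (i : Fin m) (k : ℕ), ∫ ω, X i ω ^ k ∂μ = ∫ ω, X i0 ω ^ k ∂μ :=
      fun i k => ((hident i).comp (measurable_id.pow_const k)).integral_eq
    have hprod : ∀ i j, i ≠ j → ∫ ω, X i ω ^ 2 * X j ω ^ 2 ∂μ = M2 ^ 2 := by
      intro i j h
      have := ((hindep.indepFun h).comp (measurable_id.pow_const 2)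
        (measurable_id.pow_const 2)).integral_mul_eq_mul_integral ((hXsq i).aestronglyMeasurable)
        ((hXsq j).aestronglyMeasurable)
      simp only [Pi.mul_apply] at this
      calc ∫ ω, X i ω ^ 2 * X j ω ^ 2 ∂μ
          = (∫ ω, X i ω ^ 2 ∂μ) * (∫ ω, X j ω ^ 2 ∂μ) := this
        _ = M2 ^ 2 := by rw [hmom i 2, hmom j 2]; ring
    have hdiag : ∀ i : Fin m, ∫ ω, X i ω ^ 2 * X i ω ^ 2 ∂μ = M4 := by
      intro i
      have : (fun ω => X i ω ^ 2 * X i ω ^ 2) = fun ω => X i ω ^ 4 := by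
        funext ω; ring
      rw [this, hmom i 4]
    -- inner sums
    have hinner : ∀ i : Fin m, ∑ j, ∫ ω, X i ω ^ 2 * X j ω ^ 2 ∂μ
        = M4 + ((m : ℝ) - 1) * M2 ^ 2 := by
      intro i
      rw [← Finset.add_sum_erase _ _ (Finset.mem_univ i), hdiag i]
      congr 1
      rw [Finset.sum_congr rfl (fun j hj => hprod i j (by
        exact fun h => (Finset.mem_erase.mp hj).1 h.symm)), Finset.sum_const, nsmul_eq_mul]
      congr 1
      rw [Finset.card_erase_of_mem (Finset.mem_univ i), Finset.card_univ, Fintype.card_fin]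
      push_cast [Nat.cast_sub (by omega : 1 ≤ m)]
      ring
    -- integral of A
    have hintSum4 : Integrable (fun ω => ∑ i, X i ω ^ 4) μ :=
      integrable_finset_sum _ fun i _ => hint4 i
    have hA : (∫ ω, (m:ℝ)⁻¹ * ∑ i, X i ω ^ 4 ∂μ) = M4 := by
      rw [integral_const_mul, integral_finset_sum _ fun i _ => hint4 i]
      rw [Finset.sum_congr rfl (fun i _ => hmom i 4), Finset.sum_const, Finset.card_univ,
        Fintype.card_fin, nsmul_eq_mul]
      rw [← mul_assoc, inv_mul_cancel₀ (by positivity : (m:ℝ) ≠ 0), one_mul]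
    -- integral of B
    have hBptw : ∀ ω, ((m:ℝ)⁻¹ * ∑ i, X i ω ^ 2) ^ 2
        = ((m:ℝ)⁻¹)^2 * ∑ i, ∑ j, X i ω ^ 2 * X j ω ^ 2 := by
      intro ω
      rw [mul_pow, sq (∑ i, X i ω ^ 2), Finset.sum_mul_sum]
    have hintB : Integrable (fun ω => ((m:ℝ)⁻¹ * ∑ i, X i ω ^ 2) ^ 2) μ := by
      have : Integrable (fun ω => ((m:ℝ)⁻¹)^2 * ∑ i, ∑ j, X i ω ^ 2 * X j ω ^ 2) μ :=
        (integrable_finset_sum _ fun i _ =>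
          integrable_finset_sum _ fun j _ => hintprod i j).const_mul _
      exact this.congr (ae_of_all _ fun ω => (hBptw ω).symm)
    have hB : (∫ ω, ((m:ℝ)⁻¹ * ∑ i, X i ω ^ 2) ^ 2 ∂μ)
        = ((m:ℝ)⁻¹)^2 * ((m:ℝ) * (M4 + ((m : ℝ) - 1) * M2 ^ 2)) := by
      rw [integral_congr_ae (ae_of_all _ hBptw), integral_const_mul,
        integral_finset_sum _ (fun i _ => integrable_finset_sum _ fun j _ => hintprod i j)]
      congr 1
      rw [Finset.sum_congr rfl (fun i _ => by
        rw [integral_finset_sum _ fun j _ => hintprod i j, hinner i]),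
        Finset.sum_const, Finset.card_univ, Fintype.card_fin, nsmul_eq_mul]
    -- assemble
    have hAint : Integrable (fun ω => (m:ℝ)⁻¹ * ∑ i, X i ω ^ 4) μ := hintSum4.const_mul _
    have key : (∫ ω, ((m:ℝ)+2) * ((m:ℝ)⁻¹ * ∑ i, X i ω ^ 4)
        - 3 * (m:ℝ) * (((m:ℝ)⁻¹ * ∑ i, X i ω ^ 2) ^ 2) ∂μ)
        = ((m:ℝ)+2) * M4 - 3 * (m:ℝ) * (((m:ℝ)⁻¹)^2 * ((m:ℝ) * (M4 + ((m : ℝ) - 1) * M2 ^ 2))) := by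
      rw [integral_sub ((hAint.const_mul _)) (hintB.const_mul _),
        show (∫ ω, ((m:ℝ)+2) * ((m:ℝ)⁻¹ * ∑ i, X i ω ^ 4) ∂μ) = ((m:ℝ)+2) * M4 from by
          rw [integral_const_mul, hA],
        show (∫ ω, 3 * (m:ℝ) * (((m:ℝ)⁻¹ * ∑ i, X i ω ^ 2) ^ 2) ∂μ)
            = 3 * (m:ℝ) * (((m:ℝ)⁻¹)^2 * ((m:ℝ) * (M4 + ((m : ℝ) - 1) * M2 ^ 2))) from by
          rw [integral_const_mul, hB]]
    have hmne : (m:ℝ) ≠ 0 := by positivity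
    have hm1 : (m:ℝ) - 1 ≠ 0 := by
      have : (2:ℝ) ≤ (m:ℝ) := by exact_mod_cast hm
      intro h; nlinarith
    calc (∫ ω, (((m:ℝ)+2) * ((m:ℝ)⁻¹ * ∑ i, (X i ω)^4)
            - 3 * (m:ℝ) * ((m:ℝ)⁻¹ * ∑ i, (X i ω)^2)^2) / ((m:ℝ)-1) ∂μ)
        = (∫ ω, ((m:ℝ)+2) * ((m:ℝ)⁻¹ * ∑ i, X i ω ^ 4)
            - 3 * (m:ℝ) * (((m:ℝ)⁻¹ * ∑ i, X i ω ^ 2) ^ 2) ∂μ) / ((m:ℝ)-1) := by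
          rw [integral_div]
      _ = M4 - 3 * M2 ^ 2 := by rw [key]; field_simp; ring
  · rw [hEX]; ring
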